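/- Let g be a finite-dimensional real Lie algebra and l a maximal compactly embedded subalgebra such that l = (l ∩ Lev(g)) ⊕ (l ∩ Rad(g)) for a compatible Levi factor Lev(g), with l ∩ Rad(g) abelian and commuting with Lev(g). If h ⊆ l is a subalgebra with [l, l] ⊆ h, and k ⊆ l ∩ Lev(g) is a maximal compactly embedded subalgebra of the noncompact part Lev(g)_nc with Iwasawa decomposition Lev(g)_nc = k + s, then l ∩ (s + Nil(g)) = l ∩ Nil(g), and every X ∈ l ∩ Nil(g) lies in the center C(g). -/
import Mathlib


/-- key step in Theorem 3.9: With `l` a maximal compactly embedded subalgebra,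
compatible Levi decomposition `g = Lev(g) ⊕ Rad(g)`, `Lev(g) = Lev(g)_nc ⊕ Lev(g)_cp`, Iwasawa
decomposition `Lev(g)_nc = k + s`, `l ∩ Lev(g) = k + Lev(g)_cp`, and `h ⊆ l` with
`⁅l, l⁆ ⊆ h`: one has `l ∩ (s + Nil(g)) = l ∩ Nil(g)`, and every `X ∈ l ∩ Nil(g)` is central
(since `ad X` is both semisimple and nilpotent). -/
theorem l_inter_s_nil_eq_and_central
    {L : Type*} [LieRing L] [LieAlgebra ℝ L] [Module.Finite ℝ L]
    (l h k s NilG Lev LevNc LevCp Radl : Submodule ℝ L)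
    -- compatible decomposition `l = (l ∩ Lev) ⊕ (l ∩ Rad)`
    (hdecompl : ∀ x ∈ l, ∃ a ∈ l ⊓ Lev, ∃ b ∈ l ⊓ Radl, x = a + b)
    -- `l ∩ Rad` is abelian and commutes with `Lev`
    (habel : ∀ x ∈ l ⊓ Radl, ∀ y ∈ l ⊓ Radl, ⁅x, y⁆ = 0)
    (hcomm : ∀ x ∈ l ⊓ Radl, ∀ y ∈ Lev, ⁅x, y⁆ = 0)
    -- `h ⊆ l` and `⁅l, l⁆ ⊆ h`
    (hh : h ≤ l) (hll : ∀ x ∈ l, ∀ y ∈ l, ⁅x, y⁆ ∈ h)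
    -- `Lev = Lev_nc ⊕ Lev_cp`
    (hLev : Lev = LevNc ⊔ LevCp) (hLevdisj : LevNc ⊓ LevCp = ⊥)
    -- Iwasawa decomposition `Lev_nc = k + s`
    (hIw : LevNc = k ⊔ s) (hks : k ⊓ s = ⊥) (hkl : k ≤ l ⊓ Lev)
    -- `l ∩ Lev = k + Lev_cp` (maximality) and `s` meets it trivially
    (hlLev : l ⊓ Lev = k ⊔ LevCp) (hsk : s ⊓ (k ⊔ LevCp) = ⊥)
    -- Levi decomposition: `Lev ∩ Rad = 0`, and `Nil(g) ⊆ Rad`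
    (hLevRad : Lev ⊓ Radl = ⊥) (hNilRad : NilG ≤ Radl)
    -- `ad X` is semisimple for `X` in the compactly embedded subalgebra `l`
    (hss : ∀ X ∈ l, Module.End.IsSemisimple (LieAlgebra.ad ℝ L X))
    -- `ad X` is nilpotent for `X` in the nilradical
    (hnil : ∀ X ∈ NilG, IsNilpotent (LieAlgebra.ad ℝ L X)) :
    l ⊓ (s ⊔ NilG) = l ⊓ NilG ∧
    ∀ X ∈ l ⊓ NilG, ∀ Y : L, ⁅X, Y⁆ = 0 := by
  constructor
  · apply le_antisymm
    · rintro x ⟨hxl, hxsn⟩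
      obtain ⟨σ, hσ, n, hn, rfl⟩ := Submodule.mem_sup.mp hxsn
      obtain ⟨a, ha, b, hb, hab⟩ := hdecompl _ hxl
      have hσLev : σ ∈ Lev := by
        have : σ ∈ LevNc := hIw ▸ Submodule.mem_sup_right hσ
        exact hLev ▸ Submodule.mem_sup_left this
      have key : a - σ ∈ Lev ⊓ Radl := by
        constructor
        · exact Lev.sub_mem ha.2 hσLev
        · have : a - σ = n - b := by rw [sub_eq_sub_iff_add_eq_add]; exact hab.symm.trans (add_comm σ n)
          rw [this]; exact Radl.sub_mem (hNilRad hn) hb.2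
      have haσ : a = σ := by
        exact sub_eq_zero.mp ((Submodule.mem_bot ℝ).mp (hLevRad ▸ key))
      have hσ0 : σ = 0 := by
        have : σ ∈ s ⊓ (k ⊔ LevCp) := ⟨hσ, hlLev ▸ haσ ▸ ha⟩
        exact (Submodule.mem_bot ℝ).mp (hsk ▸ this)
      refine ⟨hxl, ?_⟩
      rw [hσ0, zero_add]; exact hn
    · exact inf_le_inf_left l le_sup_right
  · rintro X ⟨hXl, hXn⟩ Y
    have h0 : LieAlgebra.ad ℝ L X = 0 :=
      Module.End.eq_zero_of_isNilpotent_isSemisimple (hnil X hXn) (hss X hXl)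
    have := congrFun (congrArg (fun f => f.toFun) h0) Y
    simpa [LieAlgebra.ad_apply] using this
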